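/- In the prefix-sum tree computation, for every node v, the top-down value t_v equals the sum of leaf values a_j over all leaves j strictly to the left of the leftmost leaf in the subtree of v. -/
import Mathlib


/-- Bottom-up values of the prefix-sum tree computation (subtree leaf-sums). -/
def sFun (d : ℕ) (a : ℕ → ℤ) : ℕ → ℕ → ℤ
  | 0, k => a k
  | f + 1, k => ∑ j ∈ Finset.range d, sFun d a f (k * d + j)

/-- Top-down values: the root receives `0`, and the `i`-th child of a node `v` receives
`t_v + Σ_{j<i} s_{child_j(v)}`. (Node `(l+1,k)` is the `(k mod d)`-th child of `(l, ⌊k/d⌋)`.) -/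
def tFun (d : ℕ) (a : ℕ → ℤ) (L : ℕ) : ℕ → ℕ → ℤ
  | 0, _ => 0
  | l + 1, k =>
      tFun d a L l (k / d) +
        ∑ j ∈ Finset.range (k % d), sFun d a (L - 1 - (l + 1)) ((k / d) * d + j)

lemma block_sum (g : ℕ → ℤ) (m : ℕ) : ∀ n : ℕ,
    ∑ j ∈ Finset.range (n * m), g j =
      ∑ j ∈ Finset.range n, ∑ i ∈ Finset.range m, g (j * m + i)
  | 0 => by simp
  | n + 1 => by
    rw [Finset.sum_range_succ, ← block_sum g m n, Nat.succ_mul, Finset.sum_range_add]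

lemma sFun_eq (d : ℕ) (a : ℕ → ℤ) : ∀ f k : ℕ,
    sFun d a f k = ∑ j ∈ Finset.range (d ^ f), a (k * d ^ f + j)
  | 0, k => by simp [sFun]
  | f + 1, k => by
    rw [sFun, pow_succ']
    rw [block_sum (fun j => a (k * (d * d ^ f) + j)) (d ^ f) d]
    refine Finset.sum_congr rfl fun j _ => ?_
    rw [sFun_eq d a f (k * d + j)]
    refine Finset.sum_congr rfl fun i _ => ?_
    ring_nf

/-- In the prefix-sum tree computation on a complete `d`-ary tree with `d^(L-1)` leaves
holding integers `a_i`, for every node `v = (l,k)`, the top-down value `t_v` equals the sum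
of leaf values `a_j` over all leaves `j` strictly to the left of the leftmost leaf
`k·d^(L-1-l)` of the subtree of `v`. -/
theorem stmt5 (d L : ℕ) (a : ℕ → ℤ) (l k : ℕ) (hd : 2 ≤ d) (hL : 1 ≤ L)
    (hl : l ≤ L - 1) (hk : k < d ^ l) :
    tFun d a L l k = ∑ j ∈ Finset.range (k * d ^ (L - 1 - l)), a j := by
  induction l generalizing k with
  | zero =>
    have : k = 0 := by simpa using hk
    simp [this, tFun]
  | succ l ih =>
    have hd0 : 0 < d := by omega
    have hkd : k / d < d ^ l := by
      rw [Nat.div_lt_iff_lt_mul hd0]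
      calc k < d ^ (l + 1) := hk
        _ = d ^ l * d := pow_succ d l
    rw [tFun, ih (k / d) (by omega) hkd]
    set N := L - 1 - (l + 1) with hN
    have hLN : L - 1 - l = N + 1 := by omega
    have key : k * d ^ N = k / d * d ^ (L - 1 - l) + k % d * d ^ N := by
      rw [hLN, pow_succ']
      have : k = k / d * d + k % d := (Nat.div_add_mod' k d).symm
      calc k * d ^ N = (k / d * d + k % d) * d ^ N := by rw [← this]
        _ = k / d * (d * d ^ N) + k % d * d ^ N := by ring
    rw [key, Finset.sum_range_add,
      block_sum (fun i => a (k / d * d ^ (L - 1 - l) + i)) (d ^ N) (k % d)]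
    congr 1
    refine Finset.sum_congr rfl fun j _ => ?_
    rw [sFun_eq]
    refine Finset.sum_congr rfl fun i _ => ?_
    congr 1
    rw [hLN, pow_succ']
    ring
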